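/- Let A be a real n×n matrix, μ > 0, and Γ a real symmetric positive definite n×n matrix such that the matrix −(A·Γ + Γ·Aᵀ + 2μ·Γ) is positive semidefinite. Then for every τ ≥ 0, the ℓ²-operator norm satisfies ‖Γ^{-1/2} · exp(τ·A) · Γ^{1/2}‖ ≤ e^{−μτ}, where Γ^{1/2} is the positive definite square root of Γ and Γ^{-1/2} its inverse. -/

import Mathlib

open Matrix
open scoped Matrix.Norms.L2Operator RealInnerProductSpace

section Aux

variable {n : ℕ}

/-- mulVec at a fixed vector, as a continuous linear map from matrices (with the L2 operator
norm) to Euclidean space. -/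
noncomputable def mulVecCLM (x : Fin n → ℝ) :
    Matrix (Fin n) (Fin n) ℝ →L[ℝ] EuclideanSpace ℝ (Fin n) :=
  LinearMap.toContinuousLinearMap
    { toFun := fun M => (WithLp.equiv 2 (Fin n → ℝ)).symm (M *ᵥ x)
      map_add' := by intro M N; ext i; simp [Matrix.add_mulVec]
      map_smul' := by intro c M; ext i; simp [Matrix.smul_mulVec] }

lemma mulVecCLM_apply (x : Fin n → ℝ) (M : Matrix (Fin n) (Fin n) ℝ) :
    mulVecCLM x M = (WithLp.equiv 2 (Fin n → ℝ)).symm (M *ᵥ x) := rfl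

/-- Dissipativity: if `C + Cᵀ ≼ 0` then `‖e^{τC} x‖ ≤ ‖x‖` for `τ ≥ 0`. -/
lemma dissipative_contraction_vec (C : Matrix (Fin n) (Fin n) ℝ)
    (hC : (-(C + Cᵀ)).PosSemidef) (x : Fin n → ℝ) {τ : ℝ} (hτ : 0 ≤ τ) :
    ‖mulVecCLM x (NormedSpace.exp (τ • C))‖ ≤
      ‖(WithLp.equiv 2 (Fin n → ℝ)).symm x‖ := by
  set φ := mulVecCLM (n := n) x with hφ
  set u : ℝ → EuclideanSpace ℝ (Fin n) := fun t => φ (NormedSpace.exp (t • C)) with hu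
  have hu' : ∀ t : ℝ, HasDerivAt u (φ (C * NormedSpace.exp (t • C))) t := by
    intro t
    exact φ.hasFDerivAt.comp_hasDerivAt t (hasDerivAt_exp_smul_const' C t)
  set g : ℝ → ℝ := fun t => ⟪u t, u t⟫ with hg
  have hg' : ∀ t : ℝ, HasDerivAt g
      (⟪u t, φ (C * NormedSpace.exp (t • C))⟫ +
        ⟪φ (C * NormedSpace.exp (t • C)), u t⟫) t := by
    intro t
    exact (hu' t).inner ℝ (hu' t)
  have key : ∀ t : ℝ,
      ⟪u t, φ (C * NormedSpace.exp (t • C))⟫ +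
        ⟪φ (C * NormedSpace.exp (t • C)), u t⟫ ≤ 0 := by
    intro t
    set y : Fin n → ℝ := (NormedSpace.exp (t • C)) *ᵥ x with hy
    have h0 := hC.dotProduct_mulVec_nonneg y
    have hstar : star y = y := by simp
    have h1 : (y ⬝ᵥ ((C + Cᵀ) *ᵥ y)) ≤ 0 := by
      rw [neg_mulVec, dotProduct_neg, hstar] at h0
      linarith
    have h2 : y ⬝ᵥ ((C + Cᵀ) *ᵥ y) = y ⬝ᵥ (C *ᵥ y) + (C *ᵥ y) ⬝ᵥ y := by
      rw [add_mulVec, dotProduct_add]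
      congr 1
      rw [dotProduct_mulVec, vecMul_transpose]
    have h3 : ⟪u t, φ (C * NormedSpace.exp (t • C))⟫ = y ⬝ᵥ (C *ᵥ y) := by
      simp only [hu, hφ, mulVecCLM_apply, ← Matrix.mulVec_mulVec, ← hy]
      simp [PiLp.inner_apply, dotProduct, mul_comm]
    have h4 : ⟪φ (C * NormedSpace.exp (t • C)), u t⟫ = (C *ᵥ y) ⬝ᵥ y := by
      simp only [hu, hφ, mulVecCLM_apply, ← Matrix.mulVec_mulVec, ← hy]
      simp [PiLp.inner_apply, dotProduct, mul_comm]
    rw [h3, h4, ← h2]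
    exact h1
  have hanti : Antitone g := by
    refine antitone_of_deriv_nonpos (fun t => (hg' t).differentiableAt) (fun t => ?_)
    rw [(hg' t).deriv]
    exact key t
  have hg0 : g τ ≤ g 0 := hanti hτ
  have hu0 : u 0 = (WithLp.equiv 2 (Fin n → ℝ)).symm x := by
    simp [hu, hφ, mulVecCLM_apply, Matrix.one_mulVec]
  have hnorm : ∀ t : ℝ, g t = ‖u t‖ ^ 2 := fun t => real_inner_self_eq_norm_sq (u t)
  have : ‖u τ‖ ^ 2 ≤ ‖(WithLp.equiv 2 (Fin n → ℝ)).symm x‖ ^ 2 := by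
    rw [← hnorm τ, ← hu0, ← hnorm 0]
    exact hg0
  exact le_of_pow_le_pow_left₀ two_ne_zero (norm_nonneg _) this

/-- Dissipativity: if `C + Cᵀ ≼ 0` then `‖e^{τC}‖ ≤ 1` for `τ ≥ 0`. -/
lemma dissipative_contraction (C : Matrix (Fin n) (Fin n) ℝ)
    (hC : (-(C + Cᵀ)).PosSemidef) {τ : ℝ} (hτ : 0 ≤ τ) :
    ‖NormedSpace.exp (τ • C)‖ ≤ 1 := by
  rw [Matrix.l2_opNorm_def]
  refine ContinuousLinearMap.opNorm_le_bound _ zero_le_one (fun v => ?_)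
  rw [one_mul]
  have h1 : ((Matrix.toEuclideanLin.trans LinearMap.toContinuousLinearMap)
      (NormedSpace.exp (τ • C))) v =
      mulVecCLM ((WithLp.equiv 2 (Fin n → ℝ)) v) (NormedSpace.exp (τ • C)) := by
    rw [mulVecCLM_apply]
    rfl
  rw [h1]
  calc ‖mulVecCLM ((WithLp.equiv 2 (Fin n → ℝ)) v) (NormedSpace.exp (τ • C))‖
      ≤ ‖(WithLp.equiv 2 (Fin n → ℝ)).symm ((WithLp.equiv 2 (Fin n → ℝ)) v)‖ :=
        dissipative_contraction_vec C hC _ hτ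
    _ = ‖v‖ := by rw [Equiv.symm_apply_apply]

section OldSqrt

open scoped ComplexOrder

/-- The positive semidefinite square root of a positive semidefinite matrix
(the definition `Matrix.PosSemidef.sqrt` of the older Mathlib, since removed). -/
noncomputable def Matrix.PosSemidef.sqrt {n 𝕜 : Type*} [Fintype n] [RCLike 𝕜] [DecidableEq n]
    {A : Matrix n n 𝕜} (hA : A.PosSemidef) : Matrix n n 𝕜 :=
  hA.1.eigenvectorUnitary.1 * diagonal ((↑) ∘ Real.sqrt ∘ hA.1.eigenvalues) *
    (star hA.1.eigenvectorUnitary : Matrix n n 𝕜)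

end OldSqrt

lemma oldSqrt_mul_self {n : ℕ} {A : Matrix (Fin n) (Fin n) ℝ} (hA : A.PosSemidef) :
    hA.sqrt * hA.sqrt = A := by
  have hU : (star hA.1.eigenvectorUnitary : Matrix (Fin n) (Fin n) ℝ) *
      hA.1.eigenvectorUnitary.1 = 1 := Unitary.coe_star_mul_self _
  unfold Matrix.PosSemidef.sqrt
  conv_rhs => rw [hA.1.spectral_theorem, Unitary.conjStarAlgAut_apply]
  calc _ = hA.1.eigenvectorUnitary.1 * diagonal ((RCLike.ofReal : ℝ → ℝ) ∘ Real.sqrt ∘ hA.1.eigenvalues) *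
        ((star hA.1.eigenvectorUnitary : Matrix (Fin n) (Fin n) ℝ) * hA.1.eigenvectorUnitary.1) *
        diagonal ((RCLike.ofReal : ℝ → ℝ) ∘ Real.sqrt ∘ hA.1.eigenvalues) *
        (star hA.1.eigenvectorUnitary : Matrix (Fin n) (Fin n) ℝ) := by
          simp only [Matrix.mul_assoc]
    _ = _ := by
      rw [hU, Matrix.mul_one, Matrix.mul_assoc (hA.1.eigenvectorUnitary.1 : Matrix (Fin n) (Fin n) ℝ) (diagonal _) (diagonal _), diagonal_mul_diagonal]
      congr 3
      ext i
      simp [Real.mul_self_sqrt (hA.eigenvalues_nonneg i)]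

lemma oldSqrt_herm {n : ℕ} {A : Matrix (Fin n) (Fin n) ℝ} (hA : A.PosSemidef) :
    (hA.sqrt)ᴴ = hA.sqrt := by
  unfold Matrix.PosSemidef.sqrt
  simp [Matrix.conjTranspose_mul, Matrix.star_eq_conjTranspose, Matrix.mul_assoc,
    Matrix.diagonal_conjTranspose]

end Aux

/-- under the Lyapunov inequality `AΓ + ΓAᵀ ≼ −2μΓ` with `Γ ≻ 0`,
one has `‖Γ^{-1/2} e^{τA} Γ^{1/2}‖ ≤ e^{−μτ}` for all `τ ≥ 0` (ℓ² operator norm). -/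
theorem lyapunov_exponential_decay {n : ℕ}
    (A Γ : Matrix (Fin n) (Fin n) ℝ) (μ : ℝ) (hμ : 0 < μ)
    (hΓsymm : Γᵀ = Γ) (hΓ : Γ.PosDef)
    (hLyap : (-(A * Γ + Γ * Aᵀ + (2 * μ) • Γ)).PosSemidef) :
    ∀ τ : ℝ, 0 ≤ τ →
      ‖(hΓ.posSemidef.sqrt)⁻¹ * NormedSpace.exp (τ • A) * hΓ.posSemidef.sqrt‖ ≤
        Real.exp (-μ * τ) := by
  intro τ hτ
  set S := hΓ.posSemidef.sqrt with hSdef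
  have hSS : S * S = Γ := oldSqrt_mul_self hΓ.posSemidef
  have hSherm : Sᴴ = S := oldSqrt_herm hΓ.posSemidef
  have hSsymm : Sᵀ = S := by
    rw [← Matrix.conjTranspose_eq_transpose_of_trivial, hSherm]
  have hSunit : IsUnit S := by
    rw [Matrix.isUnit_iff_isUnit_det, isUnit_iff_ne_zero]
    intro h
    have : Γ.det = 0 := by rw [← hSS, Matrix.det_mul, h, mul_zero]
    exact hΓ.det_pos.ne' this
  have hSdetu : IsUnit S.det := (Matrix.isUnit_iff_isUnit_det S).mp hSunit
  have hinv1 : S⁻¹ * S = 1 := Matrix.nonsing_inv_mul S hSdetu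
  have hinv2 : S * S⁻¹ = 1 := Matrix.mul_nonsing_inv S hSdetu
  have hinvSymm : (S⁻¹)ᵀ = S⁻¹ := by rw [Matrix.transpose_nonsing_inv, hSsymm]
  have hinvHerm : (S⁻¹)ᴴ = S⁻¹ := by
    rw [Matrix.conjTranspose_eq_transpose_of_trivial, hinvSymm]
  set B := S⁻¹ * A * S with hBdef
  -- conjugation of the exponential
  have hconj : S⁻¹ * NormedSpace.exp (τ • A) * S = NormedSpace.exp (τ • B) := by
    have := Matrix.exp_conj' S (τ • A) hSunit
    rw [← this]
    congr 1
    rw [hBdef, Matrix.mul_smul, Matrix.smul_mul]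
  -- transported Lyapunov inequality
  have hBt : Bᵀ = S * Aᵀ * S⁻¹ := by
    rw [hBdef, Matrix.transpose_mul, Matrix.transpose_mul, hSsymm, hinvSymm, Matrix.mul_assoc]
  have hkey : S⁻¹ * (A * Γ + Γ * Aᵀ + (2 * μ) • Γ) * S⁻¹
      = B + Bᵀ + (2 * μ) • (1 : Matrix (Fin n) (Fin n) ℝ) := by
    have e1 : S⁻¹ * (A * Γ) * S⁻¹ = B := by
      rw [← hSS, hBdef]
      calc S⁻¹ * (A * (S * S)) * S⁻¹ = S⁻¹ * A * S * (S * S⁻¹) := by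
            simp only [Matrix.mul_assoc]
        _ = S⁻¹ * A * S := by rw [hinv2, Matrix.mul_one]
    have e2 : S⁻¹ * (Γ * Aᵀ) * S⁻¹ = Bᵀ := by
      rw [← hSS, hBt]
      calc S⁻¹ * (S * S * Aᵀ) * S⁻¹ = (S⁻¹ * S) * (S * Aᵀ * S⁻¹) := by
            simp only [Matrix.mul_assoc]
        _ = S * Aᵀ * S⁻¹ := by rw [hinv1, Matrix.one_mul]
    have e3 : S⁻¹ * ((2 * μ) • Γ) * S⁻¹ = (2 * μ) • (1 : Matrix (Fin n) (Fin n) ℝ) := by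
      rw [← hSS, Matrix.mul_smul, Matrix.smul_mul]
      congr 1
      calc S⁻¹ * (S * S) * S⁻¹ = (S⁻¹ * S) * (S * S⁻¹) := by simp only [Matrix.mul_assoc]
        _ = 1 := by rw [hinv1, hinv2, Matrix.one_mul]
    calc S⁻¹ * (A * Γ + Γ * Aᵀ + (2 * μ) • Γ) * S⁻¹
        = S⁻¹ * (A * Γ) * S⁻¹ + S⁻¹ * (Γ * Aᵀ) * S⁻¹ + S⁻¹ * ((2 * μ) • Γ) * S⁻¹ := by
          simp only [Matrix.mul_add, Matrix.add_mul]
      _ = B + Bᵀ + (2 * μ) • (1 : Matrix (Fin n) (Fin n) ℝ) := by rw [e1, e2, e3]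
  have hBLyap : (-(B + Bᵀ + (2 * μ) • (1 : Matrix (Fin n) (Fin n) ℝ))).PosSemidef := by
    have : (-(B + Bᵀ + (2 * μ) • (1 : Matrix (Fin n) (Fin n) ℝ)))
        = (S⁻¹)ᴴ * (-(A * Γ + Γ * Aᵀ + (2 * μ) • Γ)) * S⁻¹ := by
      rw [Matrix.mul_neg, Matrix.neg_mul]
      congr 1
      rw [hinvHerm]
      exact hkey.symm
    rw [this]
    exact hLyap.conjTranspose_mul_mul_same (S⁻¹)
  -- shift: C = B + μ • 1 is dissipative
  set C := B + μ • (1 : Matrix (Fin n) (Fin n) ℝ) with hCdef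
  have hCdiss : (-(C + Cᵀ)).PosSemidef := by
    have : C + Cᵀ = B + Bᵀ + (2 * μ) • (1 : Matrix (Fin n) (Fin n) ℝ) := by
      rw [hCdef, Matrix.transpose_add, Matrix.transpose_smul, Matrix.transpose_one]
      module
    rw [this]
    exact hBLyap
  -- exp(τ•B) = e^{-μτ} • exp(τ•C)
  have hsplit : NormedSpace.exp (τ • B)
      = Real.exp (-(τ * μ)) • NormedSpace.exp (τ • C) := by
    have hcomm : Commute (τ • C) ((-(τ * μ)) • (1 : Matrix (Fin n) (Fin n) ℝ)) :=
      ((Commute.one_right (τ • C)).smul_right _)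
    have hsum : τ • B = τ • C + (-(τ * μ)) • (1 : Matrix (Fin n) (Fin n) ℝ) := by
      rw [hCdef]; module
    rw [hsum, Matrix.exp_add_of_commute _ _ hcomm]
    have hone : NormedSpace.exp ((-(τ * μ)) • (1 : Matrix (Fin n) (Fin n) ℝ))
        = Real.exp (-(τ * μ)) • (1 : Matrix (Fin n) (Fin n) ℝ) := by
      rw [← Algebra.algebraMap_eq_smul_one, ← NormedSpace.algebraMap_exp_comm,
        ← Real.exp_eq_exp_ℝ, Algebra.algebraMap_eq_smul_one]
    rw [hone, mul_smul_comm, Matrix.mul_one]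
  -- conclude
  rw [hconj, hsplit, norm_smul, Real.norm_eq_abs, abs_of_pos (Real.exp_pos _)]
  have hcontr : ‖NormedSpace.exp (τ • C)‖ ≤ 1 := dissipative_contraction C hCdiss hτ
  calc Real.exp (-(τ * μ)) * ‖NormedSpace.exp (τ • C)‖
      ≤ Real.exp (-(τ * μ)) * 1 := by
        exact mul_le_mul_of_nonneg_left hcontr (Real.exp_pos _).le
    _ = Real.exp (-μ * τ) := by rw [mul_one]; ring_nf
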